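/- Let p be an odd prime dividing q−1 where q is a prime power, L = PSL_2(q), and P the permutation F_p L-module on the projective line over F_q (of dimension q+1). Then P decomposes as a direct sum P = I ⊕ V, where I is the one-dimensional trivial module and V is an irreducible F_p L-module of dimension q. -/

import Mathlib

open scoped LinearAlgebra.Projectivization MatrixGroups
open Matrix

variable {F : Type} [Field F]

theorem pmap_congr {V : Type} [AddCommGroup V] [Module F V] {f₁ f₂ : V →ₗ[F] V}
    (h : f₁ = f₂) (h₁ : Function.Injective f₁) (h₂ : Function.Injective f₂) :
    Projectivization.map f₁ h₁ = Projectivization.map f₂ h₂ := by subst h; rfl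

noncomputable instance slAction :
    MulAction (SpecialLinearGroup (Fin 2) F) (ℙ F (Fin 2 → F)) where
  smul g := Projectivization.map (SpecialLinearGroup.toLin' g).toLinearMap
      (SpecialLinearGroup.toLin' g).injective
  one_smul x := by
    have h : ((SpecialLinearGroup.toLin' (1 : SpecialLinearGroup (Fin 2) F)).toLinearMap)
        = LinearMap.id := by simp only [_root_.map_one]; rfl
    have := pmap_congr h (SpecialLinearGroup.toLin'
        (1 : SpecialLinearGroup (Fin 2) F)).injective (LinearEquiv.refl F _).injective
    show Projectivization.map _ _ x = x
    rw [this, Projectivization.map_id]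
    rfl
  mul_smul a b x := by
    have h : ((SpecialLinearGroup.toLin' (a * b)).toLinearMap)
        = (SpecialLinearGroup.toLin' a).toLinearMap.comp
          (SpecialLinearGroup.toLin' b).toLinearMap := by
      simp only [_root_.map_mul]; rfl
    have := pmap_congr h (SpecialLinearGroup.toLin' (a * b)).injective
      ((SpecialLinearGroup.toLin' a).injective.comp (SpecialLinearGroup.toLin' b).injective)
    show Projectivization.map _ _ x = Projectivization.map _ _ (Projectivization.map _ _ x)
    rw [this, Projectivization.map_comp]
    rfl

variable [Fintype F] [DecidableEq F]

theorem center_smul_eq (A : SpecialLinearGroup (Fin 2) F)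
    (hA : A ∈ Subgroup.center (SpecialLinearGroup (Fin 2) F)) (x : ℙ F (Fin 2 → F)) :
    A • x = x := by
  induction x using Projectivization.ind with
  | h v hv =>
    obtain ⟨r, hr1, hr⟩ := Matrix.SpecialLinearGroup.mem_center_iff.mp hA
    show Projectivization.map _ _ _ = _
    rw [Projectivization.map_mk]
    rw [Projectivization.mk_eq_mk_iff']
    refine ⟨r, ?_⟩
    have : (SpecialLinearGroup.toLin' A).toLinearMap v = Matrix.mulVec (↑A) v := by
      rfl
    rw [this, ← hr]
    have hsc : Matrix.scalar (Fin 2) r = r • (1 : Matrix (Fin 2) (Fin 2) F) := by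
      rw [Matrix.scalar_apply, ← Matrix.smul_one_eq_diagonal]
    rw [hsc, Matrix.smul_mulVec, Matrix.one_mulVec]

noncomputable instance pslAction : MulAction (PSL(2, F)) (ℙ F (Fin 2 → F)) where
  smul g x := Quotient.liftOn' g (fun s => s • x) (fun a b hab => by
    have h : a⁻¹ * b ∈ Subgroup.center (SpecialLinearGroup (Fin 2) F) :=
      QuotientGroup.leftRel_apply.mp hab
    show a • x = b • x
    conv_rhs => rw [show b = a * (a⁻¹ * b) by group]
    rw [mul_smul, center_smul_eq _ h])
  one_smul x := one_smul (SpecialLinearGroup (Fin 2) F) x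
  mul_smul a b x := by
    refine Quotient.inductionOn₂' a b (fun a b => ?_)
    show (a * b) • x = a • (b • x)
    exact mul_smul a b x





namespace PSLaux

theorem v01_ne : (![0,1] : Fin 2 → F) ≠ 0 := by
  intro h; simpa using congrFun h 1

theorem v1a_ne (a : F) : (![1,a] : Fin 2 → F) ≠ 0 := by
  intro h; simpa using congrFun h 0

/-- the point at infinity -/
noncomputable def inftyPt : ℙ F (Fin 2 → F) := Projectivization.mk F ![0,1] v01_ne

/-- the finite point `a` -/
noncomputable def pt (a : F) : ℙ F (Fin 2 → F) := Projectivization.mk F ![1,a] (v1a_ne a)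

theorem pt_injective : Function.Injective (pt (F := F)) := by
  intro a b h
  rw [pt, pt, Projectivization.mk_eq_mk_iff'] at h
  obtain ⟨c, hc⟩ := h
  have h0 := congrFun hc 0
  have h1 := congrFun hc 1
  simp at h0 h1
  rw [h0, one_mul] at h1
  exact h1.symm

theorem pt_ne_infty (a : F) : pt a ≠ inftyPt := by
  rw [pt, inftyPt, Ne, Projectivization.mk_eq_mk_iff']
  rintro ⟨c, hc⟩
  simpa using congrFun hc 0

theorem classification (x : ℙ F (Fin 2 → F)) : x = inftyPt ∨ ∃ a, x = pt a := by
  induction x using Projectivization.ind with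
  | h v hv =>
    by_cases h0 : v 0 = 0
    · left
      have h1 : v 1 ≠ 0 := by
        intro h1
        apply hv
        funext i
        fin_cases i <;> simpa [h0]
      rw [inftyPt, Projectivization.mk_eq_mk_iff']
      exact ⟨v 1, by funext i; fin_cases i <;> simp [h0]⟩
    · right
      refine ⟨v 1 / v 0, ?_⟩
      rw [pt, Projectivization.mk_eq_mk_iff']
      exact ⟨v 0, by funext i; fin_cases i <;> simp [h0]; field_simp⟩

/-- parametrization of the projective line -/
noncomputable def ptEquiv : Option F ≃ ℙ F (Fin 2 → F) :=
  Equiv.ofBijective (fun o => o.elim inftyPt pt) (by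
    constructor
    · intro a b hab
      match a, b with
      | none, none => rfl
      | none, some b => exact absurd hab.symm (pt_ne_infty b)
      | some a, none => exact absurd hab (pt_ne_infty a)
      | some a, some b => exact congrArg _ (pt_injective hab)
    · intro x
      rcases classification x with h | ⟨a, h⟩
      · exact ⟨none, h.symm⟩
      · exact ⟨some a, h.symm⟩)

theorem mulVec_ne (A : SpecialLinearGroup (Fin 2) F) (v : Fin 2 → F) (hv : v ≠ 0) :
    Matrix.mulVec (A : Matrix (Fin 2) (Fin 2) F) v ≠ 0 := by
  intro h
  apply hv
  have h2 : SpecialLinearGroup.toLin' A v = 0 := by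
    rw [SpecialLinearGroup.toLin'_apply, Matrix.toLin'_apply]; exact h
  exact (SpecialLinearGroup.toLin' A).map_eq_zero_iff.mp h2

theorem sl_smul_mk (A : SpecialLinearGroup (Fin 2) F) (v : Fin 2 → F) (hv : v ≠ 0) :
    A • Projectivization.mk F v hv
      = Projectivization.mk F (Matrix.mulVec (A : Matrix (Fin 2) (Fin 2) F) v) (mulVec_ne A v hv) := by
  show Projectivization.map _ _ _ = _
  rw [Projectivization.map_mk, Projectivization.mk_eq_mk_iff']
  exact ⟨1, by rw [one_smul]; exact (Matrix.toLin'_apply _ _).symm⟩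

theorem psl_smul (A : SpecialLinearGroup (Fin 2) F) (x : ℙ F (Fin 2 → F)) :
    ((QuotientGroup.mk A : PSL(2, F)) • x) = A • x := rfl

/-- translation by `b` -/
def u (b : F) : SpecialLinearGroup (Fin 2) F :=
  ⟨!![1, 0; b, 1], by simp [Matrix.det_fin_two_of]⟩

theorem u_smul_pt (b a : F) : u b • pt a = pt (a + b) := by
  rw [pt, sl_smul_mk, pt, Projectivization.mk_eq_mk_iff']
  refine ⟨1, ?_⟩
  funext i
  fin_cases i <;>
    simp [u, Matrix.mulVec, dotProduct, Fin.sum_univ_two, add_comm]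

theorem u_smul_infty (b : F) : u b • (inftyPt (F := F)) = inftyPt := by
  rw [inftyPt, sl_smul_mk, Projectivization.mk_eq_mk_iff']
  refine ⟨1, ?_⟩
  funext i
  fin_cases i <;>
    simp [u, Matrix.mulVec, dotProduct, Fin.sum_univ_two]

theorem exists_sl_smul_infty (x : ℙ F (Fin 2 → F)) :
    ∃ A : SpecialLinearGroup (Fin 2) F, A • (inftyPt (F := F)) = x := by
  rcases classification x with h | ⟨a, h⟩
  · exact ⟨1, by rw [one_smul, h]⟩
  · refine ⟨(⟨!![0, 1; -1, a], by simp [Matrix.det_fin_two_of]⟩ : SpecialLinearGroup (Fin 2) F), ?_⟩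
    rw [h, inftyPt]
    refine (sl_smul_mk _ _ _).trans ?_
    rw [pt, Projectivization.mk_eq_mk_iff']
    refine ⟨1, ?_⟩
    funext i
    fin_cases i <;>
      simp [Matrix.mulVec, dotProduct, Fin.sum_univ_two]

theorem exists_sl_smul (x y : ℙ F (Fin 2 → F)) :
    ∃ A : SpecialLinearGroup (Fin 2) F, A • x = y := by
  obtain ⟨Ax, hAx⟩ := exists_sl_smul_infty x
  obtain ⟨Ay, hAy⟩ := exists_sl_smul_infty y
  refine ⟨Ay * Ax⁻¹, ?_⟩
  rw [mul_smul, ← hAx, inv_smul_smul, hAy]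

end PSLaux

/-- Let `p` be an odd prime dividing `q - 1`, `L = PSL₂(q)`, and `P` the permutation
`F_p L`-module on the projective line over `F_q` (of dimension `q + 1`).  Then
`P = I ⊕ V` where `I` is the one-dimensional trivial module and `V` is an irreducible
`F_p L`-module of dimension `q`. -/
theorem permutation_module_decomposition (p : ℕ) (hp : p.Prime) (hodd : p ≠ 2)
    (hdvd : p ∣ (Fintype.card F - 1)) :
    ∃ I V : Submodule (ZMod p) (ℙ F (Fin 2 → F) →₀ ZMod p),
      IsCompl I V ∧
      (∀ (g : PSL(2, F)), ∀ v ∈ I,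
        (Representation.ofMulAction (ZMod p) (PSL(2, F)) (ℙ F (Fin 2 → F)) g (MonoidAlgebra.ofCoeff v)).coeff = v) ∧
      Module.finrank (ZMod p) I = 1 ∧
      (∀ (g : PSL(2, F)), ∀ v ∈ V,
        (Representation.ofMulAction (ZMod p) (PSL(2, F)) (ℙ F (Fin 2 → F)) g (MonoidAlgebra.ofCoeff v)).coeff ∈ V) ∧
      Module.finrank (ZMod p) V = Fintype.card F ∧
      (∀ W : Submodule (ZMod p) (ℙ F (Fin 2 → F) →₀ ZMod p), W ≤ V →
        (∀ (g : PSL(2, F)), ∀ v ∈ W,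
          (Representation.ofMulAction (ZMod p) (PSL(2, F)) (ℙ F (Fin 2 → F)) g (MonoidAlgebra.ofCoeff v)).coeff ∈ W) →
        W = ⊥ ∨ W = V) := by
  classical
  haveI : Fact p.Prime := ⟨hp⟩
  letI : Fintype (ℙ F (Fin 2 → F)) := Fintype.ofEquiv (Option F) PSLaux.ptEquiv
  set X := ℙ F (Fin 2 → F) with hX
  set ρ : PSL(2, F) → (X →₀ ZMod p) →ₗ[ZMod p] (X →₀ ZMod p) := fun g =>
    (MonoidAlgebra.coeffLinearEquiv (ZMod p)).toLinearMap ∘ₗ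
      Representation.ofMulAction (ZMod p) (PSL(2, F)) X g ∘ₗ
        (MonoidAlgebra.coeffLinearEquiv (ZMod p)).symm.toLinearMap with hρ
  set S : (X →₀ ZMod p) →ₗ[ZMod p] ZMod p :=
    Finsupp.linearCombination (ZMod p) (fun _ : X => (1 : ZMod p)) with hS
  set T : X →₀ ZMod p := ∑ x : X, Finsupp.single x 1 with hT
  -- cardinalities
  have hcard : Fintype.card X = Fintype.card F + 1 := by
    rw [← Fintype.card_congr PSLaux.ptEquiv, Fintype.card_option]
  have hq1 : ((Fintype.card F : ZMod p)) = 1 := by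
    obtain ⟨k, hk⟩ := hdvd
    have h1 : 1 ≤ Fintype.card F := Fintype.card_pos
    have : Fintype.card F = p * k + 1 := by omega
    rw [this]
    push_cast
    rw [ZMod.natCast_self, zero_mul, zero_add]
  have h2ne : (2 : ZMod p) ≠ 0 := by
    intro h
    have := (ZMod.natCast_eq_zero_iff 2 p).mp (by exact_mod_cast h)
    rcases (Nat.prime_dvd_prime_iff_eq hp Nat.prime_two).mp this with h
    exact hodd h
  have hnne : ((Fintype.card X : ZMod p)) ≠ 0 := by
    rw [hcard]; push_cast; rw [hq1]; norm_num; exact h2ne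
  -- basic formulas
  have hSapp : ∀ v : X →₀ ZMod p, S v = ∑ x : X, v x := by
    intro v
    rw [hS, Finsupp.linearCombination_apply, Finsupp.sum_fintype]
    · simp
    · simp
  have hTapp : ∀ y : X, T y = 1 := by
    intro y
    rw [hT, Finsupp.finset_sum_apply]
    simp [Finsupp.single_apply]
  have hST : S T = (Fintype.card X : ZMod p) := by
    rw [hSapp, Finset.sum_congr rfl fun x _ => hTapp x, Finset.sum_const, Finset.card_univ,
      nsmul_eq_mul, mul_one]
  have hTne : T ≠ 0 := by
    intro h
    exact hnne (by rw [← hST, h, map_zero])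
  have hρapp : ∀ (g : PSL(2, F)) (v : X →₀ ZMod p) (y : X), (ρ g v) y = v (g⁻¹ • y) := by
    intro g v y
    exact Representation.coeff_ofMulAction g (MonoidAlgebra.ofCoeff v) y
  have hρS : ∀ (g : PSL(2, F)) (v : X →₀ ZMod p), S (ρ g v) = S v := by
    intro g v
    rw [hSapp, hSapp]
    refine Fintype.sum_bijective (g⁻¹ • ·) (MulAction.bijective g⁻¹) _ _ ?_
    intro x
    exact hρapp g v x
  have hρsingle : ∀ (g : PSL(2, F)) (x : X),
      ρ g (Finsupp.single x 1) = Finsupp.single (g • x) 1 := fun g x =>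
    congrArg MonoidAlgebra.coeff (Representation.ofMulAction_single g x (1 : ZMod p))
  have hρT : ∀ g : PSL(2, F), ρ g T = T := by
    intro g
    rw [hT, map_sum]
    refine Fintype.sum_bijective (g • ·) (MulAction.bijective g) _ _ ?_
    intro x
    exact hρsingle g x
  -- the submodules
  refine ⟨Submodule.span (ZMod p) {T}, LinearMap.ker S, ?_, ?_, ?_, ?_, ?_, ?_⟩
  · -- IsCompl
    constructor
    · rw [Submodule.disjoint_def]
      intro v hvI hvV
      obtain ⟨c, rfl⟩ := Submodule.mem_span_singleton.mp hvI
      have : c * (Fintype.card X : ZMod p) = 0 := by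
        have := LinearMap.mem_ker.mp hvV
        rwa [_root_.map_smul, hST, smul_eq_mul] at this
      rcases mul_eq_zero.mp this with h | h
      · rw [h, zero_smul]
      · exact absurd h hnne
    · rw [codisjoint_iff, eq_top_iff]
      intro v _
      have hv : v = (S v * (Fintype.card X : ZMod p)⁻¹) • T
          + (v - (S v * (Fintype.card X : ZMod p)⁻¹) • T) := by abel
      rw [hv]
      refine Submodule.add_mem_sup (Submodule.smul_mem _ _ (Submodule.mem_span_singleton_self T)) ?_
      rw [LinearMap.mem_ker, _root_.map_sub, _root_.map_smul, hST, smul_eq_mul, mul_assoc,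
        inv_mul_cancel₀ hnne, mul_one, sub_self]
  · -- triviality on I
    intro g v hv
    obtain ⟨c, rfl⟩ := Submodule.mem_span_singleton.mp hv
    change ρ g (c • T) = c • T
    rw [_root_.map_smul, hρT]
  · -- finrank I = 1
    exact finrank_span_singleton hTne
  · -- invariance of V
    intro g v hv
    change ρ g v ∈ LinearMap.ker S
    rw [LinearMap.mem_ker, hρS, ← LinearMap.mem_ker]
    exact hv
  · -- finrank V = q
    have hsurj : Function.Surjective S := by
      intro c
      refine ⟨Finsupp.single PSLaux.inftyPt c, ?_⟩
      rw [hS, Finsupp.linearCombination_single, smul_eq_mul, mul_one]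
    have hrank := LinearMap.finrank_range_add_finrank_ker S
    rw [LinearMap.range_eq_top.mpr hsurj, finrank_top, Module.finrank_self,
      Module.finrank_finsupp_self, hcard] at hrank
    exact Nat.add_left_cancel (Nat.add_comm (Fintype.card F) 1 ▸ hrank)
  · -- irreducibility
    intro W hWV hWinv
    replace hWinv : ∀ (g : PSL(2, F)), ∀ v ∈ W, ρ g v ∈ W := hWinv
    by_cases hbot : W = ⊥
    · exact Or.inl hbot
    right
    -- the distinguished vectors
    set e : X → (X →₀ ZMod p) :=
      fun x => (Fintype.card X : ZMod p) • Finsupp.single x 1 - T with he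
    have hρe : ∀ (g : PSL(2, F)) (x : X), ρ g (e x) = e (g • x) := by
      intro g x
      rw [he, _root_.map_sub, _root_.map_smul, hρsingle, hρT]
    have heapp : ∀ x y : X, (e x) y = (Fintype.card X : ZMod p) * (Finsupp.single x 1 y) - 1 := by
      intro x y
      simp [he, hTapp, Finsupp.single_apply, mul_ite, mul_one, mul_zero]
    -- a nonzero member
    obtain ⟨w, hwW, hwne⟩ := Submodule.exists_mem_ne_zero_of_ne_bot hbot
    obtain ⟨x, hx⟩ : ∃ x, w x ≠ 0 := by
      by_contra h
      push_neg at h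
      exact hwne (Finsupp.ext h)
    obtain ⟨A, hA⟩ := PSLaux.exists_sl_smul_infty x
    set w' : X →₀ ZMod p := ρ (QuotientGroup.mk A⁻¹) w with hw'
    have hw'W : w' ∈ W := hWinv _ w hwW
    have hw'infty : w' PSLaux.inftyPt = w x := by
      rw [hw', hρapp]
      congr 1
      rw [← QuotientGroup.mk_inv, inv_inv, PSLaux.psl_smul, hA]
    have hw'V : w' ∈ LinearMap.ker S := hWV hw'W
    -- averaging over translations
    set z : X →₀ ZMod p := ∑ b : F, ρ (QuotientGroup.mk (PSLaux.u b)) w' with hz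
    have hzW : z ∈ W := Submodule.sum_mem _ fun b _ => hWinv _ w' hw'W
    have hsumX : ∑ y : X, w' y = w' PSLaux.inftyPt + ∑ d : F, w' (PSLaux.pt d) := by
      rw [← Fintype.sum_bijective PSLaux.ptEquiv PSLaux.ptEquiv.bijective
        (fun o => w' (PSLaux.ptEquiv o)) _ (fun o => rfl), Fintype.sum_option]
      rfl
    have hw'sum : ∑ d : F, w' (PSLaux.pt d) = - w' PSLaux.inftyPt := by
      have h0 : S w' = 0 := LinearMap.mem_ker.mp hw'V
      rw [hSapp] at h0
      rw [hsumX] at h0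
      exact eq_neg_of_add_eq_zero_right h0
    have hzval : z = w' PSLaux.inftyPt • e PSLaux.inftyPt := by
      ext y
      rw [hz, Finsupp.finset_sum_apply]
      rcases PSLaux.classification y with rfl | ⟨c, rfl⟩
      · have hterm : ∀ b : F, (ρ (QuotientGroup.mk (PSLaux.u b)) w') PSLaux.inftyPt
            = w' PSLaux.inftyPt := by
          intro b
          rw [hρapp]
          congr 1
          rw [← QuotientGroup.mk_inv, PSLaux.psl_smul, inv_smul_eq_iff,
            PSLaux.u_smul_infty]
        rw [Finset.sum_congr rfl (fun b _ => hterm b), Finset.sum_const]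
        rw [Finsupp.smul_apply, heapp, Finsupp.single_apply, if_pos rfl, mul_one,
          hcard, Finset.card_univ, smul_eq_mul]
        push_cast
        ring
      · have hterm : ∀ b : F, (ρ (QuotientGroup.mk (PSLaux.u b)) w') (PSLaux.pt c)
            = w' (PSLaux.pt (c - b)) := by
          intro b
          rw [hρapp]
          congr 1
          rw [← QuotientGroup.mk_inv, PSLaux.psl_smul, inv_smul_eq_iff,
            PSLaux.u_smul_pt, sub_add_cancel]
        rw [Finset.sum_congr rfl (fun b _ => hterm b)]
        rw [Fintype.sum_bijective (fun b : F => c - b) (Equiv.subLeft c).bijective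
          _ (fun d => w' (PSLaux.pt d)) (fun b => rfl), hw'sum]
        rw [Finsupp.smul_apply, heapp, Finsupp.single_apply,
          if_neg (Ne.symm (PSLaux.pt_ne_infty c)), mul_zero, smul_eq_mul]
        ring
    have heinftyW : e PSLaux.inftyPt ∈ W := by
      have h1 : (w x)⁻¹ • z ∈ W := Submodule.smul_mem _ _ hzW
      rw [hzval, hw'infty, smul_smul, inv_mul_cancel₀ hx, one_smul] at h1
      exact h1
    have heW : ∀ x : X, e x ∈ W := by
      intro y
      obtain ⟨B, hB⟩ := PSLaux.exists_sl_smul_infty y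
      have := hWinv (QuotientGroup.mk B) _ heinftyW
      rwa [hρe, PSLaux.psl_smul, hB] at this
    -- conclude W = V
    refine le_antisymm hWV ?_
    intro v hv
    have hvsum : v = ∑ x : X, Finsupp.single x (v x) := by
      ext y
      rw [Finsupp.finset_sum_apply]
      simp [Finsupp.single_apply]
    have hsum : ∑ x : X, v x • e x = (Fintype.card X : ZMod p) • v := by
      rw [he]
      simp only [smul_sub, smul_smul]
      rw [Finset.sum_sub_distrib, ← Finset.sum_smul, ← hSapp,
        LinearMap.mem_ker.mp hv, zero_smul, sub_zero]
      conv_rhs => rw [hvsum, Finset.smul_sum]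
      refine Finset.sum_congr rfl fun x _ => ?_
      simp [Finsupp.smul_single, smul_eq_mul, mul_comm]
    have hvW : v = (Fintype.card X : ZMod p)⁻¹ • ∑ x : X, v x • e x := by
      rw [hsum, smul_smul, inv_mul_cancel₀ hnne, one_smul]
    rw [hvW]
    exact Submodule.smul_mem _ _ (Submodule.sum_mem _ fun x _ => Submodule.smul_mem _ _ (heW x))
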